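/- For every integer k ≥ 6 and every prime power q with q ≥ k−2, there exists a q^{k−3}-divisible [3q^{k−1} − 2q^{k−2} + 1 + (k−5)·θ_{k−1}, k, (k−2)q^{k−1} − 5q^{k−2} + 2q^{k−3}]_q linear code, where θ_{k−1} = (q^k − 1)/(q − 1). -/

import Mathlib

open Finset

namespace S9

lemma geom_mul (q m : ℕ) (hq : 1 ≤ q) :
    (∑ i ∈ Finset.range m, q ^ i) * (q - 1) = q ^ m - 1 := by
  induction m with
  | zero => simp
  | succ m ih =>
    rw [Finset.sum_range_succ, add_mul, ih]
    have h1 : 1 ≤ q ^ m := Nat.one_le_pow _ _ hq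
    have h3 : q ^ (m + 1) = q ^ m * q := pow_succ q m
    have h4 : q ^ m * (q - 1) = q ^ m * q - q ^ m := by rw [Nat.mul_sub, Nat.mul_one]
    have h5 : q ^ m ≤ q ^ m * q := Nat.le_mul_of_pos_right _ (by omega)
    omega

lemma fiber_card {V W : Type} [Fintype V] [DecidableEq V] [AddCommGroup V]
    [AddCommGroup W] [Fintype W] [DecidableEq W]
    (G : V →+ W) (hs : Function.Surjective G) (w : W) :
    (univ.filter (fun v => G v = w)).card * Fintype.card W = Fintype.card V := by
  classical
  have key : ∀ w₁ w₂ : W,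
      (univ.filter (fun v => G v = w₁)).card ≤ (univ.filter (fun v => G v = w₂)).card := by
    intro w₁ w₂
    obtain ⟨δ, hδ⟩ := hs (w₂ - w₁)
    apply Finset.card_le_card_of_injOn (fun v => v + δ)
    · intro v hv
      simp only [Finset.mem_coe, mem_filter, mem_univ, true_and] at *
      rw [map_add, hv, hδ]
      abel
    · intro a _ b _ h
      simpa using h
  have key2 : ∀ w', (univ.filter (fun v => G v = w')).card
      = (univ.filter (fun v => G v = w)).card :=
    fun w' => le_antisymm (key w' w) (key w w')
  have hcard : Fintype.card V = ∑ w' : W, (univ.filter (fun v => G v = w')).card := by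
    rw [← Finset.card_univ]
    exact Finset.card_eq_sum_card_fiberwise (fun v _ => mem_univ (G v))
  rw [hcard, Finset.sum_congr rfl (fun w' _ => key2 w'), Finset.sum_const, Finset.card_univ,
    smul_eq_mul, mul_comm]


set_option linter.unusedSectionVars false

variable {F : Type} [Field F] [Fintype F] [DecidableEq F] {k : ℕ}

/-- support of a vector -/
def suppF (v : Fin k → F) : Finset (Fin k) := univ.filter (fun i => v i ≠ 0)

/-- leading coefficient (at the least index in the support) -/
noncomputable def lead (v : Fin k → F) : F :=
  if h : (suppF v).Nonempty then v ((suppF v).min' h) else 0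

def IsMonic (v : Fin k → F) : Prop := lead v = 1

noncomputable instance : DecidablePred (IsMonic (F := F) (k := k)) := by
  unfold IsMonic; infer_instance

lemma suppF_nonempty {v : Fin k → F} (hv : v ≠ 0) : (suppF v).Nonempty := by
  by_contra h
  apply hv
  funext i
  by_contra hi
  exact h ⟨i, by simp only [suppF, mem_filter, mem_univ, true_and]; exact hi⟩

lemma lead_ne_zero {v : Fin k → F} (hv : v ≠ 0) : lead v ≠ 0 := by
  have hne := suppF_nonempty hv
  have := (suppF v).min'_mem hne
  simp only [suppF, mem_filter] at this
  rw [lead, dif_pos hne]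
  exact this.2

lemma monic_ne_zero {v : Fin k → F} (hv : IsMonic v) : v ≠ 0 := by
  intro h
  subst h
  have h0 : suppF (0 : Fin k → F) = ∅ := by
    ext i; simp [suppF]
  rw [IsMonic, lead, dif_neg (by simp [h0, Finset.not_nonempty_empty])] at hv
  exact zero_ne_one hv

lemma suppF_smul {c : F} (hc : c ≠ 0) (v : Fin k → F) : suppF (c • v) = suppF v := by
  ext i
  simp [suppF, Pi.smul_apply, smul_eq_mul, hc]

lemma lead_smul {c : F} (hc : c ≠ 0) {v : Fin k → F} (hv : v ≠ 0) :
    lead (c • v) = c * lead v := by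
  have hcv : c • v ≠ 0 := by
    intro h
    apply hv
    have := congrArg (fun w => c⁻¹ • w) h
    simpa [smul_smul, inv_mul_cancel₀ hc] using this
  have h1 := suppF_nonempty hv
  have h2 := suppF_nonempty hcv
  rw [lead, lead, dif_pos h2, dif_pos h1]
  have : (suppF (c • v)).min' h2 = (suppF v).min' h1 := by
    congr 1 <;> rw [suppF_smul hc]
  rw [this]
  simp

/-- Normalization: each nonzero scaling-invariant set has (q-1) times as many
elements as its monic part. -/
lemma monic_card_mul (S : Finset (Fin k → F)) (h0 : (0 : Fin k → F) ∉ S)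
    (hS : ∀ c : F, c ≠ 0 → ∀ v ∈ S, c • v ∈ S) :
    (S.filter IsMonic).card * (Fintype.card F - 1) = S.card := by
  classical
  have hT : (univ.filter (fun c : F => c ≠ 0)).card = Fintype.card F - 1 := by
    rw [Finset.filter_ne', Finset.card_erase_of_mem (mem_univ _), Finset.card_univ]
  rw [← hT, ← Finset.card_product]
  refine Finset.card_bij' (fun p _ => p.2 • p.1)
    (fun v _ => ((lead v)⁻¹ • v, lead v)) ?_ ?_ ?_ ?_
  · intro p hp
    simp only [Finset.mem_product, mem_filter, mem_univ, true_and] at hp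
    exact hS p.2 hp.2 p.1 hp.1.1
  · intro v hv
    have hv0 : v ≠ 0 := fun h => h0 (h ▸ hv)
    have hl := lead_ne_zero hv0
    simp only [Finset.mem_product, mem_filter, mem_univ, true_and, and_true]
    refine ⟨⟨hS _ (inv_ne_zero hl) v hv, ?_⟩, hl⟩
    rw [IsMonic, lead_smul (inv_ne_zero hl) hv0, inv_mul_cancel₀ hl]
  · intro p hp
    simp only [Finset.mem_product, mem_filter, mem_univ, true_and, and_true] at hp
    obtain ⟨⟨hp1, hpm⟩, hp2⟩ := hp
    have h1 : p.1 ≠ 0 := monic_ne_zero hpm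
    have hld : lead (p.2 • p.1) = p.2 := by
      rw [lead_smul hp2 h1, hpm, mul_one]
    show ((lead (p.2 • p.1))⁻¹ • p.2 • p.1, lead (p.2 • p.1)) = p
    rw [hld, smul_smul, inv_mul_cancel₀ hp2, one_smul]
  · intro v hv
    have hv0 : v ≠ 0 := fun h => h0 (h ▸ hv)
    have hl := lead_ne_zero hv0
    show lead v • (lead v)⁻¹ • v = v
    rw [smul_smul, mul_inv_cancel₀ hl, one_smul]


/-! ## dot product and fiber counting -/

def dot (x v : Fin k → F) : F := ∑ i, x i * v i

lemma dot_zero_right (x : Fin k → F) : dot x 0 = 0 := by simp [dot]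

lemma dot_zero_left (v : Fin k → F) : dot 0 v = 0 := by simp [dot]

lemma dot_smul_right (c : F) (x v : Fin k → F) : dot x (c • v) = c * dot x v := by
  simp only [dot, Pi.smul_apply, smul_eq_mul, Finset.mul_sum]
  exact Finset.sum_congr rfl fun i _ => by ring

lemma dot_add_left (x y v : Fin k → F) : dot (x + y) v = dot x v + dot y v := by
  simp [dot, add_mul, Finset.sum_add_distrib]

lemma dot_smul_left (c : F) (x v : Fin k → F) : dot (c • x) v = c * dot x v := by
  simp only [dot, Pi.smul_apply, smul_eq_mul, Finset.mul_sum]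
  exact Finset.sum_congr rfl fun i _ => by ring

/-- dot as a linear map in the second argument -/
def dotL (x : Fin k → F) : (Fin k → F) →ₗ[F] F where
  toFun := dot x
  map_add' u v := by simp [dot, mul_add, Finset.sum_add_distrib]
  map_smul' c v := by simp [dot_smul_right]

variable {W₀ : Type} [AddCommGroup W₀] [Module F W₀] [Fintype W₀] [DecidableEq W₀]

lemma key_count [NoZeroSMulDivisors F W₀] (p : (Fin k → F) → Prop) [DecidablePred p]
    (G₀ : (Fin k → F) →ₗ[F] W₀) (hp : ∀ v, p v ↔ G₀ v = 0)
    (σ : W₀ → (Fin k → F)) (hσ : ∀ w, G₀ (σ w) = w)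
    (x u : Fin k → F) (hu0 : G₀ u = 0) (hux : dot x u ≠ 0)
    (N : ℕ) (hN : N * (Fintype.card W₀ * Fintype.card F) = Fintype.card F ^ k) :
    (univ.filter fun v => IsMonic v ∧ p v ∧ dot x v ≠ 0).card = N := by
  classical
  have hq2 : 1 < Fintype.card F := Fintype.one_lt_card
  -- full linear map
  set Gf : (Fin k → F) →ₗ[F] W₀ × F := G₀.prod (dotL x) with hGf
  have hsurj : Function.Surjective Gf := by
    rintro ⟨w, t⟩
    refine ⟨σ w + ((t - dot x (σ w)) * (dot x u)⁻¹) • u, ?_⟩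
    have h1 : G₀ (σ w + ((t - dot x (σ w)) * (dot x u)⁻¹) • u) = w := by
      rw [map_add, map_smul, hσ, hu0, smul_zero, add_zero]
    have h2 : dotL x (σ w + ((t - dot x (σ w)) * (dot x u)⁻¹) • u) = t := by
      simp only [dotL, LinearMap.coe_mk, AddHom.coe_mk, map_add, map_smul]
      show dot x (σ w) + ((t - dot x (σ w)) * (dot x u)⁻¹) • dot x u = t
      rw [smul_eq_mul, mul_assoc, inv_mul_cancel₀ hux, mul_one]; ring
    simp [Gf, LinearMap.prod_apply, h1, h2]
  have hcardV : Fintype.card (Fin k → F) = Fintype.card F ^ k := by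
    rw [Fintype.card_fun, Fintype.card_fin]
  -- each fiber has N elements
  have hfiber : ∀ wt : W₀ × F, (univ.filter fun v => Gf v = wt).card = N := by
    intro wt
    have h := fiber_card Gf.toAddMonoidHom hsurj wt
    rw [hcardV, Fintype.card_prod] at h
    have hpos : 0 < Fintype.card W₀ * Fintype.card F :=
      Nat.mul_pos Fintype.card_pos Fintype.card_pos
    apply Nat.eq_of_mul_eq_mul_right hpos
    rw [hN]
    exact h
  -- count of the unmoniced set
  have hScard : (univ.filter fun v => p v ∧ dot x v ≠ 0).card
      = (Fintype.card F - 1) * N := by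
    rw [Finset.card_eq_sum_card_fiberwise
      (f := fun v => dot x v) (t := univ) (fun v _ => mem_univ _)]
    have hsplit : ∀ t : F,
        ((univ.filter fun v => p v ∧ dot x v ≠ 0).filter fun v => dot x v = t).card
        = if t = 0 then 0 else N := by
      intro t
      by_cases ht : t = 0
      · subst ht
        rw [if_pos rfl, Finset.card_eq_zero]
        ext v
        simp only [Finset.mem_filter, Finset.notMem_empty, iff_false, not_and, mem_univ,
          true_and]
        tauto
      · rw [if_neg ht, ← hfiber (0, t)]
        congr 1
        ext v
        have hGfv : Gf v = (G₀ v, dot x v) := rfl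
        simp only [Finset.mem_filter, mem_univ, true_and, hGfv, Prod.mk.injEq]
        constructor
        · rintro ⟨⟨hpv, -⟩, hdt⟩
          exact ⟨(hp v).1 hpv, hdt⟩
        · rintro ⟨hg, hdt⟩
          exact ⟨⟨(hp v).2 hg, by rw [hdt]; exact ht⟩, hdt⟩
    calc ∑ t : F, ((univ.filter fun v => p v ∧ dot x v ≠ 0).filter
            fun v => dot x v = t).card
        = ∑ t : F, (if t = 0 then 0 else N) :=
          Finset.sum_congr rfl fun t _ => hsplit t
      _ = (univ.filter fun t : F => ¬ t = 0).card * N := by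
          rw [Finset.sum_ite, Finset.sum_const, Finset.sum_const]; simp
      _ = (Fintype.card F - 1) * N := by
          have : (univ.filter fun t : F => ¬ t = 0) = univ.erase 0 := by
            ext t; simp
          rw [this, Finset.card_erase_of_mem (mem_univ _), Finset.card_univ]
  -- monic count
  have hmon := monic_card_mul (univ.filter fun v => p v ∧ dot x v ≠ 0)
    (by simp [dot_zero_right])
    (by
      intro c hc v hv
      simp only [mem_filter, mem_univ, true_and] at hv ⊢
      refine ⟨(hp _).2 ?_, ?_⟩
      · rw [map_smul, (hp v).1 hv.1, smul_zero]
      · rw [dot_smul_right]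
        exact mul_ne_zero hc hv.2)
  rw [hScard] at hmon
  rw [Finset.filter_filter] at hmon
  have : (univ.filter fun v => IsMonic v ∧ p v ∧ dot x v ≠ 0)
      = (univ.filter fun v => (p v ∧ dot x v ≠ 0) ∧ IsMonic v) := by
    ext v; simp; tauto
  rw [this]
  apply Nat.eq_of_mul_eq_mul_right (show 0 < Fintype.card F - 1 by omega)
  rw [hmon, mul_comm]


lemma key_count_zero (p : (Fin k → F) → Prop) [DecidablePred p] (x : Fin k → F)
    (h : ∀ v, p v → dot x v = 0) :
    (univ.filter fun v => IsMonic v ∧ p v ∧ dot x v ≠ 0).card = 0 := by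
  rw [Finset.card_eq_zero]
  ext v
  simp only [Finset.mem_filter, Finset.notMem_empty, iff_false, mem_univ, true_and, not_and]
  intro _ hpv
  simp [h v hpv]

lemma key_count_total (p : (Fin k → F) → Prop) [DecidablePred p]
    (G₀ : (Fin k → F) →ₗ[F] W₀) (hp : ∀ v, p v ↔ G₀ v = 0)
    (σ : W₀ → (Fin k → F)) (hσ : ∀ w, G₀ (σ w) = w)
    (N : ℕ) (hN : N * Fintype.card W₀ = Fintype.card F ^ k) :
    (univ.filter fun v => IsMonic v ∧ p v).card * (Fintype.card F - 1) = N - 1 := by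
  classical
  have hcardV : Fintype.card (Fin k → F) = Fintype.card F ^ k := by
    rw [Fintype.card_fun, Fintype.card_fin]
  have hsurj : Function.Surjective G₀ := fun w => ⟨σ w, hσ w⟩
  have hfib : (univ.filter fun v => G₀ v = 0).card = N := by
    have h := fiber_card G₀.toAddMonoidHom hsurj 0
    rw [hcardV] at h
    apply Nat.eq_of_mul_eq_mul_right (show 0 < Fintype.card W₀ from Fintype.card_pos)
    rw [hN]
    exact h
  have hmon := monic_card_mul (univ.filter fun v => p v ∧ v ≠ 0)
    (by simp)
    (by
      intro c hc v hv
      simp only [mem_filter, mem_univ, true_and] at hv ⊢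
      refine ⟨(hp _).2 ?_, smul_ne_zero hc hv.2⟩
      rw [map_smul, (hp v).1 hv.1, smul_zero])
  have hS : (univ.filter fun v => p v ∧ v ≠ 0).card = N - 1 := by
    have : (univ.filter fun v => p v ∧ v ≠ 0)
        = (univ.filter fun v => G₀ v = 0).erase 0 := by
      ext v
      simp only [Finset.mem_filter, Finset.mem_erase, mem_univ, true_and, hp]
      tauto
    rw [this, Finset.card_erase_of_mem, hfib]
    simp only [Finset.mem_filter, mem_univ, true_and, map_zero]
  rw [hS] at hmon
  rw [Finset.filter_filter] at hmon
  have heq : (univ.filter fun v => IsMonic v ∧ p v)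
      = (univ.filter fun v => (p v ∧ v ≠ 0) ∧ IsMonic v) := by
    ext v
    simp only [Finset.mem_filter, mem_univ, true_and]
    constructor
    · rintro ⟨hm, hpv⟩; exact ⟨⟨hpv, monic_ne_zero hm⟩, hm⟩
    · rintro ⟨⟨hpv, -⟩, hm⟩; exact ⟨hm, hpv⟩
  rw [heq, hmon]


/-! ## the concrete gadgets -/

/-- standard basis vector at natural index `j` -/
def ee (j : ℕ) : Fin k → F := fun i => if (i : ℕ) = j then 1 else 0

/-- coordinate at natural index `j` -/
def nth (j : ℕ) (v : Fin k → F) : F := if h : j < k then v ⟨j, h⟩ else 0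

lemma nth_apply {j : ℕ} (h : j < k) (v : Fin k → F) : nth j v = v ⟨j, h⟩ := dif_pos h

lemma nth_ee {j j' : ℕ} (hj : j < k) :
    nth j (ee j' : Fin k → F) = if j = j' then 1 else 0 := by
  rw [nth_apply hj, ee]

lemma dot_ee (x : Fin k → F) {j : ℕ} (hj : j < k) : dot x (ee j) = x ⟨j, hj⟩ := by
  rw [dot, Finset.sum_eq_single (⟨j, hj⟩ : Fin k)]
  · simp [ee]
  · intro i _ hi
    have : (i : ℕ) ≠ j := fun h => hi (Fin.ext h)
    simp [ee, this]
  · simp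

lemma dot_ee_left (v : Fin k → F) {j : ℕ} (hj : j < k) : dot (ee j) v = v ⟨j, hj⟩ := by
  rw [dot, Finset.sum_eq_single (⟨j, hj⟩ : Fin k)]
  · simp [ee]
  · intro i _ hi
    have : (i : ℕ) ≠ j := fun h => hi (Fin.ext h)
    simp [ee, this]
  · simp

/-- the pencil condition: `v₀ + l·v₁ = 0` -/
def fL (l : F) (v : Fin k → F) : F := nth 0 v + l * nth 1 v

/-- the moment-curve condition -/
def gL (l : F) (v : Fin k → F) : F :=
  ∑ i : Fin k, if 2 ≤ (i : ℕ) then v i * l ^ ((i : ℕ) - 2) else 0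

/-- polynomial whose values are `gL` -/
noncomputable def pV (v : Fin k → F) : Polynomial F :=
  ∑ i : Fin k, if 2 ≤ (i : ℕ) then Polynomial.C (v i) * Polynomial.X ^ ((i : ℕ) - 2) else 0

lemma pV_eval (l : F) (v : Fin k → F) : (pV v).eval l = gL l v := by
  rw [pV, Polynomial.eval_finset_sum, gL]
  refine Finset.sum_congr rfl fun i _ => ?_
  by_cases h : 2 ≤ (i : ℕ) <;> simp [h]

lemma pV_coeff (v : Fin k → F) (m : ℕ) :
    (pV v).coeff m = if h : m + 2 < k then v ⟨m + 2, h⟩ else 0 := by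
  rw [pV, Polynomial.finset_sum_coeff]
  by_cases h : m + 2 < k
  · rw [dif_pos h, Finset.sum_eq_single (⟨m + 2, h⟩ : Fin k)]
    · simp [Polynomial.coeff_C_mul, Polynomial.coeff_X_pow]
    · intro i _ hi
      by_cases h2 : 2 ≤ (i : ℕ)
      · rw [if_pos h2]
        rw [Polynomial.coeff_C_mul, Polynomial.coeff_X_pow, if_neg, mul_zero]
        intro hm
        apply hi
        apply Fin.ext
        simp only [Fin.val_mk]
        omega
      · rw [if_neg h2, Polynomial.coeff_zero]
    · simp
  · rw [dif_neg h]
    apply Finset.sum_eq_zero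
    intro i _
    by_cases h2 : 2 ≤ (i : ℕ)
    · rw [if_pos h2, Polynomial.coeff_C_mul, Polynomial.coeff_X_pow, if_neg, mul_zero]
      intro hm
      have := i.isLt
      omega
    · rw [if_neg h2, Polynomial.coeff_zero]

lemma pV_natDegree_le (hk : 3 ≤ k) (v : Fin k → F) : (pV v).natDegree ≤ k - 3 := by
  rw [Polynomial.natDegree_le_iff_coeff_eq_zero]
  intro m hm
  rw [pV_coeff, dif_neg]
  omega

lemma pV_natDegree_le' (hk : 6 ≤ k) (v : Fin k → F) (hv : nth (k - 1) v = 0) :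
    (pV v).natDegree ≤ k - 4 := by
  rw [Polynomial.natDegree_le_iff_coeff_eq_zero]
  intro m hm
  rw [pV_coeff]
  by_cases h : m + 2 < k
  · rw [dif_pos h]
    have hmk : m = k - 3 := by omega
    have : (⟨m + 2, h⟩ : Fin k) = ⟨k - 1, by omega⟩ := by
      apply Fin.ext
      simp only [Fin.val_mk]
      omega
    rw [this]
    have h2 := nth_apply (show k - 1 < k by omega) v
    rw [h2] at hv
    exact hv
  · rw [dif_neg h]

lemma pV_ne_zero (hk : 6 ≤ k) (v : Fin k → F) (hv0 : nth 0 v = 0) (hv1 : nth 1 v = 0)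
    (hv : v ≠ 0) : pV v ≠ 0 := by
  obtain ⟨i, hi⟩ : ∃ i, v i ≠ 0 := by
    by_contra h
    push_neg at h
    exact hv (funext h)
  have h2 : 2 ≤ (i : ℕ) := by
    rcases Nat.lt_or_ge (i : ℕ) 2 with h | h
    · exfalso
      have e0 : (i : ℕ) = 0 ∨ (i : ℕ) = 1 := by omega
      rcases e0 with e | e
      · apply hi
        rw [show i = (⟨0, by omega⟩ : Fin k) from Fin.ext e]
        have h0 := nth_apply (show 0 < k by omega) v
        rw [h0] at hv0
        exact hv0
      · apply hi
        rw [show i = (⟨1, by omega⟩ : Fin k) from Fin.ext e]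
        have h1 := nth_apply (show 1 < k by omega) v
        rw [h1] at hv1
        exact hv1
    · exact h
  intro h
  have := pV_coeff v ((i : ℕ) - 2)
  rw [h, Polynomial.coeff_zero] at this
  rw [dif_pos (show (i:ℕ) - 2 + 2 < k by omega)] at this
  apply hi
  rw [show i = (⟨(i:ℕ) - 2 + 2, by omega⟩ : Fin k) from Fin.ext (by simp; omega)]
  exact this.symm

def cntL (v : Fin k → F) : ℕ :=
  (univ.filter fun l : F => l ≠ 0 ∧ fL l v = 0 ∧ gL l v = 0).card

def cnt (v : Fin k → F) : ℕ :=
  (if nth 0 v = 0 then 1 else 0) + (if nth 1 v = 0 then 1 else 0) +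
  (if nth (k - 1) v = 0 then 1 else 0) + (if nth 2 v = 0 then 1 else 0) + cntL v

def chiP (v : Fin k → F) : ℕ := if nth 0 v = 0 ∧ nth 1 v = 0 then 1 else 0

noncomputable def mult (v : Fin k → F) : ℕ :=
  if IsMonic v then (k - 2) + chiP v - cnt v else 0


lemma cntL_subset_roots (hk : 6 ≤ k) (v : Fin k → F) (hpv : pV v ≠ 0) :
    (univ.filter fun l : F => l ≠ 0 ∧ fL l v = 0 ∧ gL l v = 0)
      ⊆ (pV v).roots.toFinset := by
  intro l hl
  simp only [Finset.mem_filter, mem_univ, true_and] at hl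
  rw [Multiset.mem_toFinset, Polynomial.mem_roots']
  exact ⟨hpv, by rw [Polynomial.IsRoot, pV_eval]; exact hl.2.2⟩

lemma cnt_le (hk : 6 ≤ k) (v : Fin k → F) (hv : v ≠ 0) : cnt v ≤ (k - 2) + chiP v := by
  by_cases hP : nth 0 v = 0 ∧ nth 1 v = 0
  · -- the projective-point-in-U⁺ case : polynomial root counting
    have hchi : chiP v = 1 := if_pos hP
    have hpne : pV v ≠ 0 := pV_ne_zero hk v hP.1 hP.2 hv
    -- degree + top coefficient bound
    have hd1 : (pV v).natDegree + (if nth (k - 1) v = 0 then 1 else 0) ≤ k - 3 := by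
      by_cases h3 : nth (k - 1) v = 0
      · rw [if_pos h3]
        have := pV_natDegree_le' hk v h3
        omega
      · rw [if_neg h3]
        exact pV_natDegree_le (by omega) v
    -- root counting bound
    have hd2 : cntL v + (if nth 2 v = 0 then 1 else 0) ≤ (pV v).natDegree := by
      by_cases h4 : nth 2 v = 0
      · rw [if_pos h4]
        -- 0 is a root, so pV v = X * r
        have hdvd : Polynomial.X ∣ pV v := by
          rw [Polynomial.X_dvd_iff]
          have := pV_coeff v 0
          rw [dif_pos (show 0 + 2 < k by omega)] at this
          rw [this]
          have h2 := nth_apply (show 2 < k by omega) v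
          rw [h2] at h4
          exact h4
        obtain ⟨r, hr⟩ := hdvd
        have hrne : r ≠ 0 := by
          intro h
          rw [h, mul_zero] at hr
          exact hpne hr
        have hcard : cntL v ≤ r.roots.toFinset.card := by
          apply Finset.card_le_card
          intro l hl
          simp only [Finset.mem_filter, mem_univ, true_and] at hl
          rw [Multiset.mem_toFinset, Polynomial.mem_roots']
          refine ⟨hrne, ?_⟩
          have : (pV v).eval l = 0 := by rw [pV_eval]; exact hl.2.2
          rw [hr, Polynomial.eval_mul, Polynomial.eval_X] at this
          rcases mul_eq_zero.1 this with h | h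
          · exact absurd h hl.1
          · exact h
        have hdeg : r.natDegree + 1 = (pV v).natDegree := by
          rw [hr, Polynomial.natDegree_mul Polynomial.X_ne_zero hrne,
            Polynomial.natDegree_X]
          omega
        have := (Multiset.toFinset_card_le r.roots).trans (Polynomial.card_roots' r)
        omega
      · rw [if_neg h4, add_zero]
        calc cntL v ≤ (pV v).roots.toFinset.card :=
              Finset.card_le_card (cntL_subset_roots hk v hpne)
          _ ≤ Multiset.card (pV v).roots := Multiset.toFinset_card_le _
          _ ≤ (pV v).natDegree := Polynomial.card_roots' _
    rw [cnt, hchi, if_pos hP.1, if_pos hP.2]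
    omega
  · -- not in U⁺ : at most one pencil line through the point
    have hchi : chiP v = 0 := if_neg hP
    have hcntL : cntL v ≤ 1 := by
      by_cases hb : nth 1 v = 0
      · have ha : nth 0 v ≠ 0 := fun h => hP ⟨h, hb⟩
        have : (univ.filter fun l : F => l ≠ 0 ∧ fL l v = 0 ∧ gL l v = 0) = ∅ := by
          ext l
          simp only [Finset.mem_filter, mem_univ, true_and, Finset.notMem_empty, iff_false,
            not_and]
          intro _ hf
          exfalso
          rw [fL, hb, mul_zero, add_zero] at hf
          exact ha hf
        rw [cntL, this, Finset.card_empty]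
        omega
      · have hsub : (univ.filter fun l : F => l ≠ 0 ∧ fL l v = 0 ∧ gL l v = 0)
            ⊆ {-(nth 0 v) / nth 1 v} := by
          intro l hl
          simp only [Finset.mem_filter, mem_univ, true_and] at hl
          rw [Finset.mem_singleton]
          have := hl.2.1
          rw [fL] at this
          field_simp
          linear_combination this
        exact (Finset.card_le_card hsub).trans (by simp)
    have h01 : (if nth 0 v = 0 then 1 else 0) + (if nth 1 v = 0 then 1 else 0) ≤ 1 := by
      by_cases h0 : nth 0 v = 0 <;> by_cases h1 : nth 1 v = 0 <;> simp [h0, h1]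
      exact hP ⟨h0, h1⟩
    rw [cnt, hchi]
    have h3 : (if nth (k - 1) v = 0 then 1 else 0) ≤ 1 := by split <;> omega
    have h4 : (if nth 2 v = 0 then 1 else 0) ≤ 1 := by split <;> omega
    omega


/-! ## weight sums -/

noncomputable def wtf (x : Fin k → F) : ℕ :=
  ∑ v : Fin k → F, if dot x v ≠ 0 then mult v else 0

noncomputable def cA (x : Fin k → F) : ℕ :=
  (univ.filter fun v => IsMonic v ∧ dot x v ≠ 0).card

noncomputable def cB (j : ℕ) (x : Fin k → F) : ℕ :=
  (univ.filter fun v => IsMonic v ∧ nth j v = 0 ∧ dot x v ≠ 0).card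

noncomputable def cC (l : F) (x : Fin k → F) : ℕ :=
  (univ.filter fun v => IsMonic v ∧ (fL l v = 0 ∧ gL l v = 0) ∧ dot x v ≠ 0).card

noncomputable def cE (x : Fin k → F) : ℕ :=
  (univ.filter fun v => IsMonic v ∧ (nth 0 v = 0 ∧ nth 1 v = 0) ∧ dot x v ≠ 0).card

lemma main_identity (hk : 6 ≤ k) (x : Fin k → F) :
    wtf x + (cB 0 x + cB 1 x + cB (k - 1) x + cB 2 x
      + ∑ l ∈ univ.filter (fun l : F => l ≠ 0), cC l x)
    = (k - 2) * cA x + cE x := by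
  classical
  have hcB : ∀ j : ℕ, cB j x = ∑ v : Fin k → F,
      (if IsMonic v ∧ dot x v ≠ 0 then (if nth j v = 0 then 1 else 0) else 0) := by
    intro j
    rw [cB, Finset.card_filter]
    refine Finset.sum_congr rfl fun v _ => ?_
    by_cases h1 : IsMonic v <;> by_cases h2 : nth j v = 0 <;> by_cases h3 : dot x v ≠ 0 <;>
      simp [h1, h2, h3]
  have hcC : ∑ l ∈ univ.filter (fun l : F => l ≠ 0), cC l x
      = ∑ v : Fin k → F, (if IsMonic v ∧ dot x v ≠ 0 then cntL v else 0) := by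
    have h1 : ∀ l : F, cC l x = ∑ v : Fin k → F,
        (if IsMonic v ∧ dot x v ≠ 0 then (if fL l v = 0 ∧ gL l v = 0 then 1 else 0)
          else 0) := by
      intro l
      rw [cC, Finset.card_filter]
      refine Finset.sum_congr rfl fun v _ => ?_
      by_cases hm : IsMonic v <;> by_cases hfg : fL l v = 0 ∧ gL l v = 0 <;>
        by_cases h3 : dot x v ≠ 0 <;> simp [hm, hfg, h3]
    rw [Finset.sum_congr rfl fun l _ => h1 l, Finset.sum_comm]
    refine Finset.sum_congr rfl fun v _ => ?_
    by_cases h : IsMonic v ∧ dot x v ≠ 0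
    · simp only [if_pos h]
      rw [cntL, Finset.card_filter, Finset.sum_filter]
      refine Finset.sum_congr rfl fun l _ => ?_
      by_cases hl : l = 0 <;> by_cases hfg : fL l v = 0 ∧ gL l v = 0 <;> simp [hl, hfg]
    · simp only [if_neg h]
      exact Finset.sum_eq_zero fun l _ => rfl
  have hcA : cA x = ∑ v : Fin k → F,
      (if IsMonic v ∧ dot x v ≠ 0 then 1 else 0) := by
    rw [cA, Finset.card_filter]
  have hcE : cE x = ∑ v : Fin k → F,
      (if IsMonic v ∧ dot x v ≠ 0 then (if nth 0 v = 0 ∧ nth 1 v = 0 then 1 else 0)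
        else 0) := by
    rw [cE, Finset.card_filter]
    refine Finset.sum_congr rfl fun v _ => ?_
    by_cases hm : IsMonic v <;> by_cases he : nth 0 v = 0 ∧ nth 1 v = 0 <;>
      by_cases h3 : dot x v ≠ 0 <;> simp [hm, he, h3]
  rw [hcB 0, hcB 1, hcB (k - 1), hcB 2, hcC, hcA, hcE, wtf, Finset.mul_sum]
  rw [← Finset.sum_add_distrib, ← Finset.sum_add_distrib, ← Finset.sum_add_distrib,
    ← Finset.sum_add_distrib, ← Finset.sum_add_distrib, ← Finset.sum_add_distrib]
  refine Finset.sum_congr rfl fun v _ => ?_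
  by_cases h1 : IsMonic v
  · by_cases h2 : dot x v ≠ 0
    · have hpair : IsMonic v ∧ dot x v ≠ 0 := ⟨h1, h2⟩
      simp only [if_pos hpair, if_pos h2, mult, if_pos h1, mul_one]
      have hc := cnt_le hk v (monic_ne_zero h1)
      simp only [cnt, chiP] at hc ⊢
      omega
    · have hpair : ¬ (IsMonic v ∧ dot x v ≠ 0) := fun h => h2 h.2
      simp [if_neg hpair, if_neg h2]
  · have hpair : ¬ (IsMonic v ∧ dot x v ≠ 0) := fun h => h1 h.1
    simp [if_neg hpair, mult, if_neg h1]

lemma total_identity (hk : 6 ≤ k) :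
    (∑ v : Fin k → F, mult v)
      + ((univ.filter fun v : Fin k → F => IsMonic v ∧ nth 0 v = 0).card
        + (univ.filter fun v : Fin k → F => IsMonic v ∧ nth 1 v = 0).card
        + (univ.filter fun v : Fin k → F => IsMonic v ∧ nth (k - 1) v = 0).card
        + (univ.filter fun v : Fin k → F => IsMonic v ∧ nth 2 v = 0).card
        + ∑ l ∈ univ.filter (fun l : F => l ≠ 0),
            (univ.filter fun v : Fin k → F => IsMonic v ∧ (fL l v = 0 ∧ gL l v = 0)).card)
    = (k - 2) * (univ.filter fun v : Fin k → F => IsMonic v).card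
      + (univ.filter fun v : Fin k → F => IsMonic v ∧ (nth 0 v = 0 ∧ nth 1 v = 0)).card := by
  classical
  have hcB : ∀ j : ℕ, (univ.filter fun v : Fin k → F => IsMonic v ∧ nth j v = 0).card
      = ∑ v : Fin k → F, (if IsMonic v then (if nth j v = 0 then 1 else 0) else 0) := by
    intro j
    rw [Finset.card_filter]
    refine Finset.sum_congr rfl fun v _ => ?_
    by_cases h1 : IsMonic v <;> by_cases h2 : nth j v = 0 <;> simp [h1, h2]
  have hcC : ∑ l ∈ univ.filter (fun l : F => l ≠ 0),
      (univ.filter fun v : Fin k → F => IsMonic v ∧ (fL l v = 0 ∧ gL l v = 0)).card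
      = ∑ v : Fin k → F, (if IsMonic v then cntL v else 0) := by
    have h1 : ∀ l : F, (univ.filter fun v : Fin k → F
          => IsMonic v ∧ (fL l v = 0 ∧ gL l v = 0)).card
        = ∑ v : Fin k → F,
          (if IsMonic v then (if fL l v = 0 ∧ gL l v = 0 then 1 else 0) else 0) := by
      intro l
      rw [Finset.card_filter]
      refine Finset.sum_congr rfl fun v _ => ?_
      by_cases hm : IsMonic v <;> by_cases hfg : fL l v = 0 ∧ gL l v = 0 <;> simp [hm, hfg]
    rw [Finset.sum_congr rfl fun l _ => h1 l, Finset.sum_comm]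
    refine Finset.sum_congr rfl fun v _ => ?_
    by_cases h : IsMonic v
    · simp only [if_pos h]
      rw [cntL, Finset.card_filter, Finset.sum_filter]
      refine Finset.sum_congr rfl fun l _ => ?_
      by_cases hl : l = 0 <;> by_cases hfg : fL l v = 0 ∧ gL l v = 0 <;> simp [hl, hfg]
    · simp only [if_neg h]
      exact Finset.sum_eq_zero fun l _ => rfl
  have hcA : (univ.filter fun v : Fin k → F => IsMonic v).card
      = ∑ v : Fin k → F, (if IsMonic v then 1 else 0) := by
    rw [Finset.card_filter]
  have hcE : (univ.filter fun v : Fin k → F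
        => IsMonic v ∧ (nth 0 v = 0 ∧ nth 1 v = 0)).card
      = ∑ v : Fin k → F,
        (if IsMonic v then (if nth 0 v = 0 ∧ nth 1 v = 0 then 1 else 0) else 0) := by
    rw [Finset.card_filter]
    refine Finset.sum_congr rfl fun v _ => ?_
    by_cases hm : IsMonic v <;> by_cases he : nth 0 v = 0 ∧ nth 1 v = 0 <;> simp [hm, he]
  rw [hcB 0, hcB 1, hcB (k - 1), hcB 2, hcC, hcA, hcE, Finset.mul_sum]
  rw [← Finset.sum_add_distrib, ← Finset.sum_add_distrib, ← Finset.sum_add_distrib,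
    ← Finset.sum_add_distrib, ← Finset.sum_add_distrib, ← Finset.sum_add_distrib]
  refine Finset.sum_congr rfl fun v _ => ?_
  by_cases h1 : IsMonic v
  · simp only [if_pos h1, mult, mul_one]
    have hc := cnt_le hk v (monic_ne_zero h1)
    simp only [cnt, chiP] at hc ⊢
    omega
  · simp [mult, if_neg h1]


/-! ## linear-map versions of the gadget functionals -/

instance : NoZeroSMulDivisors F PUnit :=
  ⟨fun {_ x} _ => Or.inr (Subsingleton.elim x 0)⟩

def nthL (j : ℕ) : (Fin k → F) →ₗ[F] F :=
  if h : j < k then LinearMap.proj ⟨j, h⟩ else 0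

lemma nthL_apply (j : ℕ) (v : Fin k → F) : nthL j v = nth j v := by
  by_cases h : j < k <;> simp [nthL, nth, h]

def fLL (l : F) : (Fin k → F) →ₗ[F] F := nthL 0 + l • nthL 1

lemma fLL_apply (l : F) (v : Fin k → F) : fLL l v = fL l v := by
  simp [fLL, fL, nthL_apply]

def gLL (l : F) : (Fin k → F) →ₗ[F] F :=
  ∑ i : Fin k, if 2 ≤ (i : ℕ) then (l ^ ((i : ℕ) - 2)) • LinearMap.proj i else 0

lemma gLL_apply (l : F) (v : Fin k → F) : gLL l v = gL l v := by
  rw [gLL, LinearMap.sum_apply, gL]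
  refine Finset.sum_congr rfl fun i _ => ?_
  by_cases h : 2 ≤ (i : ℕ) <;> simp [h, mul_comm]

lemma dot_add_right (x u w : Fin k → F) : dot x (u + w) = dot x u + dot x w :=
  (dotL x).map_add u w

/-! ## values of the gadget functionals on basis vectors -/

lemma fL_ee (l : F) {j : ℕ} (hk2 : 2 ≤ k) :
    fL l (ee j : Fin k → F) = (if 0 = j then 1 else 0) + l * (if 1 = j then 1 else 0) := by
  rw [fL, nth_ee (by omega), nth_ee (by omega)]

lemma gL_ee (l : F) {j : ℕ} (hj : j < k) (hj2 : 2 ≤ j) :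
    gL l (ee j : Fin k → F) = l ^ (j - 2) := by
  rw [gL, Finset.sum_eq_single (⟨j, hj⟩ : Fin k)]
  · simp [ee, hj2]
  · intro i _ hi
    have hne : (i : ℕ) ≠ j := fun h => hi (Fin.ext h)
    by_cases h : 2 ≤ (i : ℕ) <;> simp [ee, h, hne]
  · simp

lemma gL_ee_small (l : F) {j : ℕ} (hj2 : j < 2) :
    gL l (ee j : Fin k → F) = 0 := by
  rw [gL]
  apply Finset.sum_eq_zero
  intro i _
  by_cases h : 2 ≤ (i : ℕ)
  · have : (i : ℕ) ≠ j := by omega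
    simp [ee, h, this]
  · simp [h]

/-! ## evaluations of the monic counts -/

lemma cA_eq (hk : 6 ≤ k) (x : Fin k → F) (hx : x ≠ 0) :
    cA x = Fintype.card F ^ (k - 1) := by
  obtain ⟨i, hi⟩ : ∃ i, x i ≠ 0 := by
    by_contra h
    push_neg at h
    exact hx (funext h)
  have h := key_count (fun _ : Fin k → F => True)
    (0 : (Fin k → F) →ₗ[F] PUnit) (fun v => by simp)
    (fun _ => 0) (fun w => Subsingleton.elim _ _)
    x (ee (i : ℕ))
    (by simp) (by rw [dot_ee x i.isLt]; simpa using hi)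
    (Fintype.card F ^ (k - 1))
    (by
      simp only [Fintype.card_punit, one_mul]
      have h2 : (k - 1) + 1 = k := by omega
      calc Fintype.card F ^ (k - 1) * Fintype.card F
          = Fintype.card F ^ ((k - 1) + 1) := by ring
        _ = _ := by rw [h2])
  rw [cA, ← h]
  apply congrArg
  apply Finset.filter_congr
  intro v _
  simp

lemma cB_eq (hk : 6 ≤ k) {j : ℕ} (hj : j < k) (x : Fin k → F)
    (hex : ∃ u : Fin k → F, nth j u = 0 ∧ dot x u ≠ 0) :
    cB j x = Fintype.card F ^ (k - 2) := by
  obtain ⟨u, hu0, hux⟩ := hex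
  have h := key_count (fun v : Fin k → F => nth j v = 0)
    (nthL j) (fun v => by rw [nthL_apply])
    (fun a => a • ee j)
    (fun a => by
      rw [map_smul, nthL_apply, nth_ee hj, if_pos rfl, smul_eq_mul, mul_one])
    x u (by rw [nthL_apply]; exact hu0) hux
    (Fintype.card F ^ (k - 2))
    (by
      have h2 : (k - 2) + 1 + 1 = k := by omega
      calc Fintype.card F ^ (k - 2) * (Fintype.card F * Fintype.card F)
          = Fintype.card F ^ ((k - 2) + 1 + 1) := by ring
        _ = _ := by rw [h2])
  rw [cB, ← h]

lemma cB_zero {j : ℕ} (x : Fin k → F)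
    (h : ∀ v : Fin k → F, nth j v = 0 → dot x v = 0) :
    cB j x = 0 :=
  key_count_zero (fun v : Fin k → F => nth j v = 0) x h

lemma cC_eq (hk : 6 ≤ k) (l : F) (x : Fin k → F)
    (hex : ∃ u : Fin k → F, (fL l u = 0 ∧ gL l u = 0) ∧ dot x u ≠ 0) :
    cC l x = Fintype.card F ^ (k - 3) := by
  obtain ⟨u, hu0, hux⟩ := hex
  have hfe0 : fL l (ee 0 : Fin k → F) = 1 := by
    rw [fL_ee l (by omega)]; norm_num
  have hfe2 : fL l (ee 2 : Fin k → F) = 0 := by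
    rw [fL_ee l (by omega)]; norm_num
  have hge0 : gL l (ee 0 : Fin k → F) = 0 := gL_ee_small l (by omega)
  have hge2 : gL l (ee 2 : Fin k → F) = 1 := by
    rw [gL_ee l (by omega) (by omega)]; simp
  have hPA : ∀ v : Fin k → F, ((fLL l).prod (gLL l)) v = (fLL l v, gLL l v) :=
    fun v => rfl
  have h := key_count (fun v : Fin k → F => fL l v = 0 ∧ gL l v = 0)
    ((fLL l).prod (gLL l))
    (fun v => by
      rw [hPA, Prod.mk_eq_zero, fLL_apply, gLL_apply])
    (fun w => w.1 • ee 0 + w.2 • ee 2)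
    (fun w => by
      rw [hPA]
      have h1 : fLL l (w.1 • (ee 0 : Fin k → F) + w.2 • ee 2) = w.1 := by
        rw [map_add, map_smul, map_smul, fLL_apply, fLL_apply, hfe0, hfe2]
        simp
      have h2 : gLL l (w.1 • (ee 0 : Fin k → F) + w.2 • ee 2) = w.2 := by
        rw [map_add, map_smul, map_smul, gLL_apply, gLL_apply, hge0, hge2]
        simp
      rw [h1, h2])
    x u
    (by
      rw [hPA, fLL_apply, gLL_apply, hu0.1, hu0.2]
      rfl)
    hux
    (Fintype.card F ^ (k - 3))
    (by
      rw [Fintype.card_prod]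
      have h2 : (k - 3) + 1 + 1 + 1 = k := by omega
      calc Fintype.card F ^ (k - 3) * (Fintype.card F * Fintype.card F * Fintype.card F)
          = Fintype.card F ^ ((k - 3) + 1 + 1 + 1) := by ring
        _ = _ := by rw [h2])
  rw [cC, ← h]

lemma cC_zero (l : F) (x : Fin k → F)
    (h : ∀ v : Fin k → F, fL l v = 0 → gL l v = 0 → dot x v = 0) :
    cC l x = 0 :=
  key_count_zero (fun v : Fin k → F => fL l v = 0 ∧ gL l v = 0) x
    (fun v hv => h v hv.1 hv.2)

lemma cE_eq (hk : 6 ≤ k) (x : Fin k → F)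
    (hex : ∃ u : Fin k → F, (nth 0 u = 0 ∧ nth 1 u = 0) ∧ dot x u ≠ 0) :
    cE x = Fintype.card F ^ (k - 3) := by
  obtain ⟨u, hu0, hux⟩ := hex
  have hPA : ∀ v : Fin k → F, ((nthL 0).prod (nthL 1)) v = (nthL 0 v, nthL 1 v) :=
    fun v => rfl
  have h := key_count (fun v : Fin k → F => nth 0 v = 0 ∧ nth 1 v = 0)
    ((nthL 0).prod (nthL 1))
    (fun v => by
      rw [hPA, Prod.mk_eq_zero, nthL_apply, nthL_apply])
    (fun w => w.1 • ee 0 + w.2 • ee 1)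
    (fun w => by
      rw [hPA]
      have h1 : nthL 0 (w.1 • (ee 0 : Fin k → F) + w.2 • ee 1) = w.1 := by
        rw [map_add, map_smul, map_smul, nthL_apply, nthL_apply,
          nth_ee (show 0 < k by omega), nth_ee (show 0 < k by omega)]
        simp
      have h2 : nthL 1 (w.1 • (ee 0 : Fin k → F) + w.2 • ee 1) = w.2 := by
        rw [map_add, map_smul, map_smul, nthL_apply, nthL_apply,
          nth_ee (show 1 < k by omega), nth_ee (show 1 < k by omega)]
        simp
      rw [h1, h2])
    x u
    (by
      rw [hPA, nthL_apply, nthL_apply, hu0.1, hu0.2]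
      rfl)
    hux
    (Fintype.card F ^ (k - 3))
    (by
      rw [Fintype.card_prod]
      have h2 : (k - 3) + 1 + 1 + 1 = k := by omega
      calc Fintype.card F ^ (k - 3) * (Fintype.card F * Fintype.card F * Fintype.card F)
          = Fintype.card F ^ ((k - 3) + 1 + 1 + 1) := by ring
        _ = _ := by rw [h2])
  rw [cE, ← h]

lemma cE_zero (x : Fin k → F)
    (h : ∀ v : Fin k → F, nth 0 v = 0 → nth 1 v = 0 → dot x v = 0) :
    cE x = 0 :=
  key_count_zero (fun v : Fin k → F => nth 0 v = 0 ∧ nth 1 v = 0) x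
    (fun v hv => h v hv.1 hv.2)

lemma cB_cases (hk : 6 ≤ k) {j : ℕ} (hj : j < k) (x : Fin k → F) :
    cB j x = 0 ∨ cB j x = Fintype.card F ^ (k - 2) := by
  by_cases hex : ∃ u : Fin k → F, nth j u = 0 ∧ dot x u ≠ 0
  · exact Or.inr (cB_eq hk hj x hex)
  · push_neg at hex
    exact Or.inl (cB_zero x fun v hv => by
      by_contra h
      exact h (hex v hv))

lemma cC_cases (hk : 6 ≤ k) (l : F) (x : Fin k → F) :
    cC l x = 0 ∨ cC l x = Fintype.card F ^ (k - 3) := by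
  by_cases hex : ∃ u : Fin k → F, (fL l u = 0 ∧ gL l u = 0) ∧ dot x u ≠ 0
  · exact Or.inr (cC_eq hk l x hex)
  · push_neg at hex
    exact Or.inl (cC_zero l x fun v hv1 hv2 => by
      by_contra h
      exact h (hex v ⟨hv1, hv2⟩))

lemma cE_cases (hk : 6 ≤ k) (x : Fin k → F) :
    cE x = 0 ∨ cE x = Fintype.card F ^ (k - 3) := by
  by_cases hex : ∃ u : Fin k → F, (nth 0 u = 0 ∧ nth 1 u = 0) ∧ dot x u ≠ 0
  · exact Or.inr (cE_eq hk x hex)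
  · push_neg at hex
    exact Or.inl (cE_zero x fun v hv1 hv2 => by
      by_contra h
      exact h (hex v ⟨hv1, hv2⟩))


/-! ## total counts -/

lemma Mon_total (hk : 6 ≤ k) :
    (univ.filter fun v : Fin k → F => IsMonic v).card * (Fintype.card F - 1)
      = Fintype.card F ^ k - 1 := by
  have h := key_count_total (fun _ : Fin k → F => True)
    (0 : (Fin k → F) →ₗ[F] PUnit) (fun v => by simp)
    (fun _ => 0) (fun w => Subsingleton.elim _ _)
    (Fintype.card F ^ k) (by simp)
  rw [← h]
  congr 1
  apply congrArg
  apply Finset.filter_congr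
  intro v _
  simp

lemma B_total (hk : 6 ≤ k) {j : ℕ} (hj : j < k) :
    (univ.filter fun v : Fin k → F => IsMonic v ∧ nth j v = 0).card
      * (Fintype.card F - 1) = Fintype.card F ^ (k - 1) - 1 := by
  exact key_count_total (fun v : Fin k → F => nth j v = 0)
    (nthL j) (fun v => by rw [nthL_apply])
    (fun a => a • ee j)
    (fun a => by
      rw [map_smul, nthL_apply, nth_ee hj, if_pos rfl, smul_eq_mul, mul_one])
    (Fintype.card F ^ (k - 1))
    (by
      have h2 : (k - 1) + 1 = k := by omega
      calc Fintype.card F ^ (k - 1) * Fintype.card F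
          = Fintype.card F ^ ((k - 1) + 1) := by ring
        _ = _ := by rw [h2])

lemma C_total (hk : 6 ≤ k) (l : F) :
    (univ.filter fun v : Fin k → F => IsMonic v ∧ (fL l v = 0 ∧ gL l v = 0)).card
      * (Fintype.card F - 1) = Fintype.card F ^ (k - 2) - 1 := by
  have hfe0 : fL l (ee 0 : Fin k → F) = 1 := by
    rw [fL_ee l (by omega)]; norm_num
  have hfe2 : fL l (ee 2 : Fin k → F) = 0 := by
    rw [fL_ee l (by omega)]; norm_num
  have hge0 : gL l (ee 0 : Fin k → F) = 0 := gL_ee_small l (by omega)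
  have hge2 : gL l (ee 2 : Fin k → F) = 1 := by
    rw [gL_ee l (by omega) (by omega)]; simp
  have hPA : ∀ v : Fin k → F, ((fLL l).prod (gLL l)) v = (fLL l v, gLL l v) :=
    fun v => rfl
  exact key_count_total (fun v : Fin k → F => fL l v = 0 ∧ gL l v = 0)
    ((fLL l).prod (gLL l))
    (fun v => by
      rw [hPA, Prod.mk_eq_zero, fLL_apply, gLL_apply])
    (fun w => w.1 • ee 0 + w.2 • ee 2)
    (fun w => by
      rw [hPA]
      have h1 : fLL l (w.1 • (ee 0 : Fin k → F) + w.2 • ee 2) = w.1 := by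
        rw [map_add, map_smul, map_smul, fLL_apply, fLL_apply, hfe0, hfe2]
        simp
      have h2 : gLL l (w.1 • (ee 0 : Fin k → F) + w.2 • ee 2) = w.2 := by
        rw [map_add, map_smul, map_smul, gLL_apply, gLL_apply, hge0, hge2]
        simp
      rw [h1, h2])
    (Fintype.card F ^ (k - 2))
    (by
      rw [Fintype.card_prod]
      have h2 : (k - 2) + 1 + 1 = k := by omega
      calc Fintype.card F ^ (k - 2) * (Fintype.card F * Fintype.card F)
          = Fintype.card F ^ ((k - 2) + 1 + 1) := by ring
        _ = _ := by rw [h2])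

lemma E_total (hk : 6 ≤ k) :
    (univ.filter fun v : Fin k → F => IsMonic v ∧ (nth 0 v = 0 ∧ nth 1 v = 0)).card
      * (Fintype.card F - 1) = Fintype.card F ^ (k - 2) - 1 := by
  have hPA : ∀ v : Fin k → F, ((nthL 0).prod (nthL 1)) v = (nthL 0 v, nthL 1 v) :=
    fun v => rfl
  exact key_count_total (fun v : Fin k → F => nth 0 v = 0 ∧ nth 1 v = 0)
    ((nthL 0).prod (nthL 1))
    (fun v => by
      rw [hPA, Prod.mk_eq_zero, nthL_apply, nthL_apply])
    (fun w => w.1 • ee 0 + w.2 • ee 1)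
    (fun w => by
      rw [hPA]
      have h1 : nthL 0 (w.1 • (ee 0 : Fin k → F) + w.2 • ee 1) = w.1 := by
        rw [map_add, map_smul, map_smul, nthL_apply, nthL_apply,
          nth_ee (show 0 < k by omega), nth_ee (show 0 < k by omega)]
        simp
      have h2 : nthL 1 (w.1 • (ee 0 : Fin k → F) + w.2 • ee 1) = w.2 := by
        rw [map_add, map_smul, map_smul, nthL_apply, nthL_apply,
          nth_ee (show 1 < k by omega), nth_ee (show 1 < k by omega)]
        simp
      rw [h1, h2])
    (Fintype.card F ^ (k - 2))
    (by
      rw [Fintype.card_prod]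
      have h2 : (k - 2) + 1 + 1 = k := by omega
      calc Fintype.card F ^ (k - 2) * (Fintype.card F * Fintype.card F)
          = Fintype.card F ^ ((k - 2) + 1 + 1) := by ring
        _ = _ := by rw [h2])


/-! ## the key numerical identity -/

lemma NID (q k : ℕ) (hk : 6 ≤ k) (hq : 2 ≤ q) :
    ((k - 2) * q ^ (k - 1) - 5 * q ^ (k - 2) + 2 * q ^ (k - 3)) + 4 * q ^ (k - 2)
      + (q - 1) * q ^ (k - 3)
    = (k - 2) * q ^ (k - 1) + q ^ (k - 3) := by
  have e1 : q ^ (k - 2) = q * q ^ (k - 3) := by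
    rw [← pow_succ']
    congr 1
    omega
  have e2 : q ^ (k - 1) = q * q ^ (k - 2) := by
    rw [← pow_succ']
    congr 1
    omega
  have h5 : 5 * q ^ (k - 2) ≤ (k - 2) * q ^ (k - 1) := by
    rw [e2]
    calc 5 * q ^ (k - 2) ≤ ((k - 2) * q) * q ^ (k - 2) := by
          apply Nat.mul_le_mul_right
          have h8 : 4 * 2 ≤ (k - 2) * q := Nat.mul_le_mul (by omega) hq
          omega
      _ = (k - 2) * (q * q ^ (k - 2)) := by ring
  have e1' : (q : ℤ) ^ (k - 2) = q * q ^ (k - 3) := by exact_mod_cast e1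
  zify [h5, show 1 ≤ q by omega]
  linear_combination (-1 : ℤ) * e1'

/-- the minimum distance -/
lemma wtf_ge (hk : 6 ≤ k) (x : Fin k → F) (hx : x ≠ 0) :
    (k - 2) * Fintype.card F ^ (k - 1) - 5 * Fintype.card F ^ (k - 2)
      + 2 * Fintype.card F ^ (k - 3) ≤ wtf x := by
  classical
  set q := Fintype.card F with hqdef
  have hq2 : 2 ≤ q := Fintype.one_lt_card
  have hid := main_identity hk x
  rw [cA_eq hk x hx] at hid
  have hnid := NID q k hk hq2
  have hB0 : cB 0 x ≤ q ^ (k - 2) :=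
    (cB_cases hk (by omega) x).elim (fun h => by rw [h]; exact Nat.zero_le _) le_of_eq
  have hB1 : cB 1 x ≤ q ^ (k - 2) :=
    (cB_cases hk (by omega) x).elim (fun h => by rw [h]; exact Nat.zero_le _) le_of_eq
  have hB2 : cB 2 x ≤ q ^ (k - 2) :=
    (cB_cases hk (by omega) x).elim (fun h => by rw [h]; exact Nat.zero_le _) le_of_eq
  have hB3 : cB (k - 1) x ≤ q ^ (k - 2) :=
    (cB_cases hk (by omega) x).elim (fun h => by rw [h]; exact Nat.zero_le _) le_of_eq
  have hcardl : (univ.filter fun l : F => l ≠ 0).card = q - 1 := by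
    have : (univ.filter fun l : F => l ≠ 0) = univ.erase 0 := by ext t; simp
    rw [this, Finset.card_erase_of_mem (mem_univ _), Finset.card_univ]
  have hC : ∑ l ∈ univ.filter (fun l : F => l ≠ 0), cC l x ≤ (q - 1) * q ^ (k - 3) := by
    calc ∑ l ∈ univ.filter (fun l : F => l ≠ 0), cC l x
        ≤ ∑ _l ∈ univ.filter (fun l : F => l ≠ 0), q ^ (k - 3) :=
          Finset.sum_le_sum fun l _ =>
            (cC_cases hk l x).elim (fun h => by rw [h]; exact Nat.zero_le _) le_of_eq
      _ = (q - 1) * q ^ (k - 3) := by rw [Finset.sum_const, hcardl, smul_eq_mul]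
  have e1 : q ^ (k - 2) = q * q ^ (k - 3) := by
    rw [← pow_succ']
    congr 1
    omega
  have hq3le : q ^ (k - 3) ≤ q ^ (k - 2) := by
    rw [e1]
    exact Nat.le_mul_of_pos_left _ (by omega)
  by_cases hE : ∃ u : Fin k → F, (nth 0 u = 0 ∧ nth 1 u = 0) ∧ dot x u ≠ 0
  · rw [cE_eq hk x hE] at hid
    linarith
  · push_neg at hE
    have hcE0 : cE x = 0 := cE_zero x fun v h1 h2 => hE v ⟨h1, h2⟩
    rw [hcE0] at hid
    have hx2 : ∀ i : Fin k, 2 ≤ (i : ℕ) → x i = 0 := by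
      intro i hi
      have h0 : nth 0 (ee (i : ℕ) : Fin k → F) = 0 := by
        rw [nth_ee (by omega)]
        simp only [ite_eq_right_iff]
        omega
      have h1 : nth 1 (ee (i : ℕ) : Fin k → F) = 0 := by
        rw [nth_ee (by omega)]
        simp only [ite_eq_right_iff]
        omega
      have := hE (ee (i : ℕ)) ⟨h0, h1⟩
      rw [dot_ee x i.isLt] at this
      simpa using this
    have h0k : (0 : ℕ) < k := by omega
    have h1k : (1 : ℕ) < k := by omega
    have hdot : ∀ v : Fin k → F,
        dot x v = x ⟨0, h0k⟩ * v ⟨0, h0k⟩ + x ⟨1, h1k⟩ * v ⟨1, h1k⟩ := by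
      intro v
      rw [dot, ← Finset.sum_subset
        (Finset.subset_univ ({⟨0, h0k⟩, ⟨1, h1k⟩} : Finset (Fin k)))]
      · rw [Finset.sum_pair (by simp [Fin.ext_iff])]
      · intro i _ hi
        simp only [Finset.mem_insert, Finset.mem_singleton, Fin.ext_iff, Fin.val_mk] at hi
        have h2 : 2 ≤ (i : ℕ) := by omega
        rw [hx2 i h2, zero_mul]
    by_cases hx1 : x ⟨1, h1k⟩ = 0
    · have hcB0 : cB 0 x = 0 := by
        apply cB_zero
        intro v hv
        rw [nth_apply h0k] at hv
        rw [hdot v, hv, hx1, mul_zero, zero_mul, add_zero]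
      rw [hcB0] at hid
      linarith
    · by_cases hx0 : x ⟨0, h0k⟩ = 0
      · have hcB1 : cB 1 x = 0 := by
          apply cB_zero
          intro v hv
          rw [nth_apply h1k] at hv
          rw [hdot v, hv, hx0, mul_zero, zero_mul, add_zero]
        rw [hcB1] at hid
        linarith
      · set l₀ : F := x ⟨1, h1k⟩ * (x ⟨0, h0k⟩)⁻¹ with hl₀
        have hl₀ne : l₀ ≠ 0 := mul_ne_zero hx1 (inv_ne_zero hx0)
        have hC0 : cC l₀ x = 0 := by
          apply cC_zero
          intro v hf _
          rw [fL, nth_apply h0k, nth_apply h1k] at hf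
          rw [hdot v]
          have hmul : x ⟨0, h0k⟩ * (v ⟨0, h0k⟩ + l₀ * v ⟨1, h1k⟩) = 0 := by
            rw [hf, mul_zero]
          rw [hl₀] at hmul
          field_simp at hmul
          linear_combination hmul
        have hmem : l₀ ∈ univ.filter (fun l : F => l ≠ 0) := by
          simp [hl₀ne]
        have hCsum : ∑ l ∈ univ.filter (fun l : F => l ≠ 0), cC l x
            ≤ (q - 2) * q ^ (k - 3) := by
          rw [← Finset.add_sum_erase _ _ hmem, hC0, zero_add]
          calc ∑ l ∈ (univ.filter fun l : F => l ≠ 0).erase l₀, cC l x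
              ≤ ∑ _l ∈ (univ.filter fun l : F => l ≠ 0).erase l₀, q ^ (k - 3) :=
                Finset.sum_le_sum fun l _ =>
                  (cC_cases hk l x).elim (fun h => by rw [h]; exact Nat.zero_le _) le_of_eq
            _ = (q - 2) * q ^ (k - 3) := by
                rw [Finset.sum_const, Finset.card_erase_of_mem hmem, hcardl, smul_eq_mul]
                have hqq : q - 1 - 1 = q - 2 := by omega
                rw [hqq]
        have hsplit : (q - 1) * q ^ (k - 3) = (q - 2) * q ^ (k - 3) + q ^ (k - 3) := by
          have h21 : q - 1 = (q - 2) + 1 := by omega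
          rw [h21, add_mul, one_mul]
        linarith


/-! ## the minimum weight is attained -/

lemma xstar_facts (hk : 6 ≤ k) :
    (ee 2 + ee (k - 1) : Fin k → F) ≠ 0 ∧
    wtf (ee 2 + ee (k - 1) : Fin k → F)
      = (k - 2) * Fintype.card F ^ (k - 1) - 5 * Fintype.card F ^ (k - 2)
        + 2 * Fintype.card F ^ (k - 3) := by
  classical
  set q := Fintype.card F with hqdef
  have hq2 : 2 ≤ q := Fintype.one_lt_card
  set xs : Fin k → F := ee 2 + ee (k - 1) with hxs
  have h2k : (2 : ℕ) < k := by omega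
  have h3k : (3 : ℕ) < k := by omega
  have hk1k : k - 1 < k := by omega
  have hdotxs : ∀ v : Fin k → F, dot xs v = nth 2 v + nth (k - 1) v := by
    intro v
    rw [hxs, dot_add_left, dot_ee_left v h2k, dot_ee_left v hk1k,
      nth_apply h2k, nth_apply hk1k]
  have hnthsum : ∀ j : ℕ, nth j xs = nth j (ee 2 : Fin k → F) + nth j (ee (k - 1) : Fin k → F) := by
    intro j
    rw [hxs, ← nthL_apply, map_add, nthL_apply, nthL_apply]
  have hxsne : xs ≠ 0 := by
    intro h
    have h1 : nth 2 xs = 1 := by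
      rw [hnthsum 2, nth_ee h2k, nth_ee h2k, if_pos rfl, if_neg (by omega : (2:ℕ) ≠ k - 1)]
      norm_num
    rw [h, nth, dif_pos h2k] at h1
    simp at h1
  refine ⟨hxsne, ?_⟩
  have hid := main_identity hk xs
  rw [cA_eq hk xs hxsne] at hid
  rw [← hqdef] at hid
  -- witnesses
  have hdee2 : dot xs (ee 2 : Fin k → F) = 1 := by
    rw [hdotxs, nth_ee h2k, nth_ee hk1k, if_pos rfl, if_neg (by omega : k - 1 ≠ 2)]
    norm_num
  have hdeek : dot xs (ee (k - 1) : Fin k → F) = 1 := by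
    rw [hdotxs, nth_ee h2k, nth_ee hk1k, if_pos rfl, if_neg (by omega : (2 : ℕ) ≠ k - 1)]
    norm_num
  have hB0 : cB 0 xs = q ^ (k - 2) := by
    apply cB_eq hk (by omega) xs
    exact ⟨ee 2, by rw [nth_ee (by omega), if_neg (by omega : (0:ℕ) ≠ 2)],
      by rw [hdee2]; exact one_ne_zero⟩
  have hB1 : cB 1 xs = q ^ (k - 2) := by
    apply cB_eq hk (by omega) xs
    exact ⟨ee 2, by rw [nth_ee (by omega), if_neg (by omega : (1:ℕ) ≠ 2)],
      by rw [hdee2]; exact one_ne_zero⟩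
  have hB2 : cB 2 xs = q ^ (k - 2) := by
    apply cB_eq hk (by omega) xs
    exact ⟨ee (k - 1), by rw [nth_ee (by omega), if_neg (by omega : (2:ℕ) ≠ k - 1)],
      by rw [hdeek]; exact one_ne_zero⟩
  have hB3 : cB (k - 1) xs = q ^ (k - 2) := by
    apply cB_eq hk (by omega) xs
    exact ⟨ee 2, by rw [nth_ee (by omega), if_neg (by omega : k - 1 ≠ 2)],
      by rw [hdee2]; exact one_ne_zero⟩
  have hEe : cE xs = q ^ (k - 3) := by
    apply cE_eq hk xs
    exact ⟨ee 2, ⟨by rw [nth_ee (by omega), if_neg (by omega : (0:ℕ) ≠ 2)],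
      by rw [nth_ee (by omega), if_neg (by omega : (1:ℕ) ≠ 2)]⟩,
      by rw [hdee2]; exact one_ne_zero⟩
  have hCall : ∀ l : F, l ≠ 0 → cC l xs = q ^ (k - 3) := by
    intro l hl
    apply cC_eq hk l xs
    refine ⟨(ee 3 : Fin k → F) - l • ee 2, ⟨?_, ?_⟩, ?_⟩
    · have hnth : ∀ j : ℕ, nth j ((ee 3 : Fin k → F) - l • ee 2)
          = nth j (ee 3 : Fin k → F) - l * nth j (ee 2 : Fin k → F) := by
        intro j
        rw [← nthL_apply, map_sub, map_smul, nthL_apply, nthL_apply, smul_eq_mul]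
      rw [fL, hnth 0, hnth 1, nth_ee (by omega), nth_ee (by omega),
        nth_ee (by omega), nth_ee (by omega)]
      rw [if_neg (by omega : (0:ℕ) ≠ 3), if_neg (by omega : (0:ℕ) ≠ 2),
        if_neg (by omega : (1:ℕ) ≠ 3), if_neg (by omega : (1:ℕ) ≠ 2)]
      ring
    · rw [← gLL_apply, map_sub, map_smul, gLL_apply, gLL_apply, smul_eq_mul,
        gL_ee l h3k (by omega), gL_ee l h2k (by omega)]
      norm_num
    · have hnth : ∀ j : ℕ, nth j ((ee 3 : Fin k → F) - l • ee 2)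
          = nth j (ee 3 : Fin k → F) - l * nth j (ee 2 : Fin k → F) := by
        intro j
        rw [← nthL_apply, map_sub, map_smul, nthL_apply, nthL_apply, smul_eq_mul]
      rw [hdotxs, hnth 2, hnth (k - 1), nth_ee h2k, nth_ee hk1k, nth_ee h2k, nth_ee hk1k]
      rw [if_neg (by omega : (2:ℕ) ≠ 3), if_pos rfl,
        if_neg (by omega : k - 1 ≠ 3), if_neg (by omega : k - 1 ≠ 2)]
      simpa using hl
  have hcardl : (univ.filter fun l : F => l ≠ 0).card = q - 1 := by
    have : (univ.filter fun l : F => l ≠ 0) = univ.erase 0 := by ext t; simp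
    rw [this, Finset.card_erase_of_mem (mem_univ _), Finset.card_univ]
  have hCsum : ∑ l ∈ univ.filter (fun l : F => l ≠ 0), cC l xs
      = (q - 1) * q ^ (k - 3) := by
    rw [Finset.sum_congr rfl fun l hl => hCall l (by
      simp only [mem_filter, mem_univ, true_and] at hl
      exact hl), Finset.sum_const, hcardl, smul_eq_mul]
  rw [hB0, hB1, hB2, hB3, hEe, hCsum] at hid
  have hnid := NID q k hk hq2
  linarith

/-! ## divisibility of all weights -/

lemma wtf_dvd (hk : 6 ≤ k) (x : Fin k → F) :
    Fintype.card F ^ (k - 3) ∣ wtf x := by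
  classical
  set q := Fintype.card F with hqdef
  by_cases hx : x = 0
  · subst hx
    have : wtf (0 : Fin k → F) = 0 := by
      rw [wtf]
      apply Finset.sum_eq_zero
      intro v _
      rw [if_neg]
      simp [dot_zero_left]
    rw [this]
    exact dvd_zero _
  · have hid := main_identity hk x
    rw [cA_eq hk x hx] at hid
    rw [← hqdef] at hid
    have e1 : q ^ (k - 2) = q * q ^ (k - 3) := by
      rw [← pow_succ']
      congr 1
      omega
    have e2 : q ^ (k - 1) = (q * q) * q ^ (k - 3) := by
      rw [mul_assoc, ← pow_succ', ← pow_succ']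
      congr 1
      omega
    have hdvdB : ∀ j : ℕ, j < k → q ^ (k - 3) ∣ cB j x := by
      intro j hj
      rcases cB_cases hk hj x with h | h
      · rw [h]; exact dvd_zero _
      · rw [h, e1]; exact dvd_mul_left _ _
    have hdvdC : ∀ l : F, q ^ (k - 3) ∣ cC l x := by
      intro l
      rcases cC_cases hk l x with h | h
      · rw [h]; exact dvd_zero _
      · rw [h]
    have hdvdE : q ^ (k - 3) ∣ cE x := by
      rcases cE_cases hk x with h | h
      · rw [h]; exact dvd_zero _
      · rw [h]
    have hdvdRHS : q ^ (k - 3) ∣ (k - 2) * q ^ (k - 1) + cE x := by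
      apply Nat.dvd_add _ hdvdE
      rw [e2]
      exact ⟨(k - 2) * (q * q), by ring⟩
    have hdvdSum : q ^ (k - 3) ∣ cB 0 x + cB 1 x + cB (k - 1) x + cB 2 x
        + ∑ l ∈ univ.filter (fun l : F => l ≠ 0), cC l x := by
      apply Nat.dvd_add
      apply Nat.dvd_add
      apply Nat.dvd_add
      apply Nat.dvd_add
      · exact hdvdB 0 (by omega)
      · exact hdvdB 1 (by omega)
      · exact hdvdB (k - 1) (by omega)
      · exact hdvdB 2 (by omega)
      · exact Finset.dvd_sum fun l _ => hdvdC l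
    have hw : wtf x = ((k - 2) * q ^ (k - 1) + cE x)
        - (cB 0 x + cB 1 x + cB (k - 1) x + cB 2 x
          + ∑ l ∈ univ.filter (fun l : F => l ≠ 0), cC l x) :=
      Nat.eq_sub_of_add_eq hid
    rw [hw]
    exact Nat.dvd_sub hdvdRHS hdvdSum


/-! ## the length identity -/

lemma units_card : (univ.filter fun l : F => l ≠ 0).card = Fintype.card F - 1 := by
  have : (univ.filter fun l : F => l ≠ 0) = univ.erase 0 := by ext t; simp
  rw [this, Finset.card_erase_of_mem (mem_univ _), Finset.card_univ]

lemma NID2 (q k : ℕ) (hk : 6 ≤ k) (hq : 2 ≤ q) :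
    (3 * q ^ (k - 1) - 2 * q ^ (k - 2) + 1 + (k - 5) * ((q ^ k - 1) / (q - 1))) * (q - 1)
      + (4 * (q ^ (k - 1) - 1) + (q - 1) * (q ^ (k - 2) - 1))
    = (k - 2) * (q ^ k - 1) + (q ^ (k - 2) - 1) := by
  have hgeom := geom_mul q k (by omega)
  have hdvd : (q - 1) ∣ (q ^ k - 1) := Dvd.intro_left _ hgeom
  set T := (q ^ k - 1) / (q - 1) with hTdef
  clear_value T
  have hT : T * (q - 1) = q ^ k - 1 := by rw [hTdef]; exact Nat.div_mul_cancel hdvd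
  have hA : q ^ k = q * q ^ (k - 1) := by rw [← pow_succ']; congr 1; omega
  have hB : q ^ (k - 1) = q * q ^ (k - 2) := by rw [← pow_succ']; congr 1; omega
  have h32 : 2 * q ^ (k - 2) ≤ 3 * q ^ (k - 1) := by
    rw [hB]
    calc 2 * q ^ (k - 2) ≤ (3 * q) * q ^ (k - 2) :=
          Nat.mul_le_mul_right _ (by omega)
      _ = 3 * (q * q ^ (k - 2)) := by ring
  have h1 : 1 ≤ q ^ (k - 1) := Nat.one_le_pow _ _ (by omega)
  have h2 : 1 ≤ q ^ (k - 2) := Nat.one_le_pow _ _ (by omega)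
  have h0 : 1 ≤ q ^ k := Nat.one_le_pow _ _ (by omega)
  have hA' : (q : ℤ) ^ k = q * q ^ (k - 1) := by exact_mod_cast hA
  have hB' : (q : ℤ) ^ (k - 1) = q * q ^ (k - 2) := by exact_mod_cast hB
  have hT' : (T : ℤ) * ((q : ℤ) - 1) = (q : ℤ) ^ k - 1 := by
    zify [show 1 ≤ q by omega, h0] at hT
    exact hT
  zify [h32, h1, h2, h0, show 1 ≤ q by omega, show 5 ≤ k by omega, show 2 ≤ k by omega]
  linear_combination ((k : ℤ) - 5) * hT' - 3 * hA' + hB'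

lemma length_eq (hk : 6 ≤ k) :
    (∑ v : Fin k → F, mult v)
    = 3 * Fintype.card F ^ (k - 1) - 2 * Fintype.card F ^ (k - 2) + 1
      + (k - 5) * ((Fintype.card F ^ k - 1) / (Fintype.card F - 1)) := by
  classical
  have hq2 : 2 ≤ Fintype.card F := Fintype.one_lt_card
  have htot := total_identity (F := F) (k := k) hk
  apply Nat.eq_of_mul_eq_mul_right (show 0 < Fintype.card F - 1 by omega)
  have hmul := congrArg (· * (Fintype.card F - 1)) htot
  simp only [add_mul] at hmul
  rw [mul_assoc (k - 2)] at hmul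
  rw [Mon_total hk, B_total hk (show (0:ℕ) < k by omega), B_total hk (show (1:ℕ) < k by omega),
    B_total hk (show k - 1 < k by omega), B_total hk (show (2:ℕ) < k by omega),
    E_total hk] at hmul
  have hCsum : (∑ l ∈ univ.filter (fun l : F => l ≠ 0),
      (univ.filter fun v : Fin k → F => IsMonic v ∧ (fL l v = 0 ∧ gL l v = 0)).card)
        * (Fintype.card F - 1)
      = (Fintype.card F - 1) * (Fintype.card F ^ (k - 2) - 1) := by
    rw [Finset.sum_mul, Finset.sum_congr rfl (fun l _ => C_total hk l), Finset.sum_const,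
      units_card, smul_eq_mul]
  rw [hCsum] at hmul
  have hnid2 := NID2 (Fintype.card F) k hk hq2
  linarith


/-! ## the code itself -/

lemma card_sigma_filter (hk : 6 ≤ k) (x : Fin k → F) :
    (univ.filter fun s : (Σ v : Fin k → F, Fin (mult v)) => dot x s.1 ≠ 0).card
      = wtf x := by
  classical
  rw [wtf]
  have hstep : (univ.filter fun s : (Σ v : Fin k → F, Fin (mult v)) => dot x s.1 ≠ 0)
      = (univ.filter fun v : Fin k → F => dot x v ≠ 0).sigma
          (fun v => (univ : Finset (Fin (mult v)))) := by
    ext ⟨v, j⟩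
    simp [Finset.mem_sigma]
  rw [hstep, Finset.card_sigma, Finset.sum_filter]
  refine Finset.sum_congr rfl fun v _ => ?_
  by_cases h : dot x v ≠ 0
  · rw [if_pos h, if_pos h, Finset.card_univ, Fintype.card_fin]
  · rw [if_neg h, if_neg h]

lemma card_sigma_total (hk : 6 ≤ k) :
    Fintype.card (Σ v : Fin k → F, Fin (mult v)) = ∑ v : Fin k → F, mult v := by
  rw [Fintype.card_sigma]
  simp [Fintype.card_fin]

end S9

/-- `C` is an `[n, k, d]_q` linear code over `F`: a `k`-dimensional `F`-linear subspace of
`F^n` such that the minimum Hamming weight of a nonzero codeword equals `d`. -/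
def IsLinearCodeWith (F : Type) [Field F] [DecidableEq F] (n k d : ℕ)
    (C : Submodule F (Fin n → F)) : Prop :=
  Module.finrank F C = k ∧
  (∀ c ∈ C, c ≠ 0 → d ≤ hammingNorm c) ∧
  (∃ c ∈ C, c ≠ 0 ∧ hammingNorm c = d)

/-- For every integer `k ≥ 6` and every prime power `q ≥ k - 2`, there exists a
`q^{k-3}`-divisible `[3q^{k-1} - 2q^{k-2} + 1 + (k-5)θ_{k-1}, k,
(k-2)q^{k-1} - 5q^{k-2} + 2q^{k-3}]_q` code, where `θ_{k-1} = (q^k - 1)/(q - 1)`. -/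
theorem statement9 (k q : ℕ) (hk : 6 ≤ k) (hq : IsPrimePow q) (hkq : k - 2 ≤ q)
    (F : Type) [Field F] [Fintype F] [DecidableEq F] (hF : Fintype.card F = q) :
    ∃ C : Submodule F
        (Fin (3 * q ^ (k - 1) - 2 * q ^ (k - 2) + 1 + (k - 5) * ((q ^ k - 1) / (q - 1))) → F),
      IsLinearCodeWith F
        (3 * q ^ (k - 1) - 2 * q ^ (k - 2) + 1 + (k - 5) * ((q ^ k - 1) / (q - 1))) k
        ((k - 2) * q ^ (k - 1) - 5 * q ^ (k - 2) + 2 * q ^ (k - 3)) C ∧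
      ∀ c ∈ C, q ^ (k - 3) ∣ hammingNorm c := by
  classical
  subst hF
  have hq2 : 2 ≤ Fintype.card F := Fintype.one_lt_card
  have hcard : Fintype.card (Σ v : Fin k → F, Fin (S9.mult v))
      = 3 * Fintype.card F ^ (k - 1) - 2 * Fintype.card F ^ (k - 2) + 1
        + (k - 5) * ((Fintype.card F ^ k - 1) / (Fintype.card F - 1)) := by
    rw [S9.card_sigma_total hk, S9.length_eq hk]
  let e : (Σ v : Fin k → F, Fin (S9.mult v))
      ≃ Fin (3 * Fintype.card F ^ (k - 1) - 2 * Fintype.card F ^ (k - 2) + 1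
        + (k - 5) * ((Fintype.card F ^ k - 1) / (Fintype.card F - 1))) :=
    Fintype.equivFinOfCardEq hcard
  let G : (Fin k → F) →ₗ[F]
      (Fin (3 * Fintype.card F ^ (k - 1) - 2 * Fintype.card F ^ (k - 2) + 1
        + (k - 5) * ((Fintype.card F ^ k - 1) / (Fintype.card F - 1))) → F) :=
    { toFun := fun x => fun j => S9.dot x ((e.symm j).1)
      map_add' := fun x y => funext fun j => S9.dot_add_left x y _
      map_smul' := fun c x => funext fun j => S9.dot_smul_left c x _ }
  have hham : ∀ x : Fin k → F, hammingNorm (G x) = S9.wtf x := by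
    intro x
    rw [← S9.card_sigma_filter hk x, hammingNorm]
    apply Finset.card_bij (fun j _ => e.symm j)
    · intro j hj
      simp only [Finset.mem_filter, Finset.mem_univ, true_and] at hj ⊢
      exact hj
    · intro a _ b _ hab
      exact e.symm.injective hab
    · intro s hs
      refine ⟨e s, ?_, by simp⟩
      simp only [Finset.mem_filter, Finset.mem_univ, true_and] at hs ⊢
      show S9.dot x ((e.symm (e s)).1) ≠ 0
      rw [e.symm_apply_apply]
      exact hs
  have hd_pos : 0 < (k - 2) * Fintype.card F ^ (k - 1) - 5 * Fintype.card F ^ (k - 2)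
      + 2 * Fintype.card F ^ (k - 3) := by
    have h1 : 0 < Fintype.card F ^ (k - 3) := Nat.pow_pos (by omega)
    omega
  have hinj : Function.Injective G := by
    intro x y hxy
    by_contra hne
    have hx : x - y ≠ 0 := sub_ne_zero.2 hne
    have h0 : G (x - y) = 0 := by rw [map_sub, hxy, sub_self]
    have hge := S9.wtf_ge hk (x - y) hx
    rw [← hham, h0, hammingNorm_zero, Nat.le_zero] at hge
    exact hd_pos.ne' hge
  obtain ⟨hxsne, hxsval⟩ := S9.xstar_facts (F := F) hk
  refine ⟨LinearMap.range G, ⟨?_, ?_, ?_⟩, ?_⟩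
  · rw [LinearMap.finrank_range_of_inj hinj, Module.finrank_fin_fun]
  · intro c hc hcne
    obtain ⟨x, rfl⟩ := LinearMap.mem_range.mp hc
    have hx : x ≠ 0 := by
      rintro rfl
      exact hcne (map_zero G)
    rw [hham]
    exact S9.wtf_ge hk x hx
  · refine ⟨G (S9.ee 2 + S9.ee (k - 1)), LinearMap.mem_range_self G _, ?_, ?_⟩
    · intro h
      have h2 := hxsval
      rw [← hham, h, hammingNorm_zero] at h2
      exact hd_pos.ne' h2.symm
    · rw [hham]
      exact hxsval
  · intro c hc
    obtain ⟨x, rfl⟩ := LinearMap.mem_range.mp hc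
    rw [hham]
    exact S9.wtf_dvd hk x
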